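/- Fix natural numbers N₁, N₂, r₁ ≤ N₁, r₂ ≤ N₂, and matrices δ* : Matrix (Fin r₁) (Fin (N₁ - r₁)) ℝ and γ* : Matrix (Fin r₂) (Fin (N₂ - r₂)) ℝ. Let Ω be the 4 × 4 block matrix (with row-block index types (Fin (N₂-r₂) × Fin (N₁-r₁)) ⊕ (Fin r₂ × Fin (N₁-r₁)) ⊕ (Fin (N₂-r₂) × Fin r₁) ⊕ (Fin r₂ × Fin r₁) and column-block index types (Fin (N₂-r₂) × Fin (N₁-r₁)) ⊕ (Fin (N₂-r₂) × Fin r₁) ⊕ (Fin r₂ × Fin (N₁-r₁)) ⊕ (Fin r₂ × Fin r₁)) whose block rows are: [1, 1 ⊗ δ*ᵀ, γ*ᵀ ⊗ 1, γ*ᵀ ⊗ δ*ᵀ], [0, 0, 1, 1 ⊗ δ*ᵀ], [0, 1, 0, γ*ᵀ ⊗ 1], [0, 0, 0, 1], where each 1 is an identity matrix and each 0 a zero matrix of conformable dimensions. Then the determinant of Ω has absolute value one: |det Ω| = 1. -/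

import Mathlib

open Matrix Kronecker

theorem stmt11 {N₁ N₂ r₁ r₂ : ℕ} (hr₁ : r₁ ≤ N₁) (hr₂ : r₂ ≤ N₂)
    (δs : Matrix (Fin r₁) (Fin (N₁ - r₁)) ℝ)
    (γs : Matrix (Fin r₂) (Fin (N₂ - r₂)) ℝ)
    (Ω : Matrix
      ((Fin (N₂ - r₂) × Fin (N₁ - r₁)) ⊕ (Fin r₂ × Fin (N₁ - r₁)) ⊕
        (Fin (N₂ - r₂) × Fin r₁) ⊕ (Fin r₂ × Fin r₁))
      ((Fin (N₂ - r₂) × Fin (N₁ - r₁)) ⊕ (Fin (N₂ - r₂) × Fin r₁) ⊕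
        (Fin r₂ × Fin (N₁ - r₁)) ⊕ (Fin r₂ × Fin r₁)) ℝ)
    (hΩ : Ω = Matrix.fromBlocks
      (1 : Matrix (Fin (N₂ - r₂) × Fin (N₁ - r₁)) (Fin (N₂ - r₂) × Fin (N₁ - r₁)) ℝ)
      (Matrix.fromCols
        ((1 : Matrix (Fin (N₂ - r₂)) (Fin (N₂ - r₂)) ℝ) ⊗ₖ δsᵀ)
        (Matrix.fromCols
          (γsᵀ ⊗ₖ (1 : Matrix (Fin (N₁ - r₁)) (Fin (N₁ - r₁)) ℝ))
          (γsᵀ ⊗ₖ δsᵀ)))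
      0
      (Matrix.fromBlocks
        (0 : Matrix (Fin r₂ × Fin (N₁ - r₁)) (Fin (N₂ - r₂) × Fin r₁) ℝ)
        (Matrix.fromCols
          (1 : Matrix (Fin r₂ × Fin (N₁ - r₁)) (Fin r₂ × Fin (N₁ - r₁)) ℝ)
          ((1 : Matrix (Fin r₂) (Fin r₂) ℝ) ⊗ₖ δsᵀ))
        (Matrix.fromRows
          (1 : Matrix (Fin (N₂ - r₂) × Fin r₁) (Fin (N₂ - r₂) × Fin r₁) ℝ)
          (0 : Matrix (Fin r₂ × Fin r₁) (Fin (N₂ - r₂) × Fin r₁) ℝ))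
        (Matrix.fromBlocks
          (0 : Matrix (Fin (N₂ - r₂) × Fin r₁) (Fin r₂ × Fin (N₁ - r₁)) ℝ)
          (γsᵀ ⊗ₖ (1 : Matrix (Fin r₁) (Fin r₁) ℝ))
          (0 : Matrix (Fin r₂ × Fin r₁) (Fin r₂ × Fin (N₁ - r₁)) ℝ)
          (1 : Matrix (Fin r₂ × Fin r₁) (Fin r₂ × Fin r₁) ℝ))))
    (e : ((Fin (N₂ - r₂) × Fin (N₁ - r₁)) ⊕ (Fin r₂ × Fin (N₁ - r₁)) ⊕
        (Fin (N₂ - r₂) × Fin r₁) ⊕ (Fin r₂ × Fin r₁)) ≃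
      ((Fin (N₂ - r₂) × Fin (N₁ - r₁)) ⊕ (Fin (N₂ - r₂) × Fin r₁) ⊕
        (Fin r₂ × Fin (N₁ - r₁)) ⊕ (Fin r₂ × Fin r₁)))
    (he : e = Equiv.sumCongr (Equiv.refl _)
      (((Equiv.sumAssoc _ _ _).symm.trans
        ((Equiv.sumComm (Fin r₂ × Fin (N₁ - r₁)) (Fin (N₂ - r₂) × Fin r₁)).sumCongr
          (Equiv.refl (Fin r₂ × Fin r₁)))).trans
        (Equiv.sumAssoc _ _ _))) :
    |(Ω.submatrix e.symm id).det| = 1 := by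
  subst hΩ he
  set A := Fin (N₂ - r₂) × Fin (N₁ - r₁)
  set B := Fin r₂ × Fin (N₁ - r₁)
  set C := Fin (N₂ - r₂) × Fin r₁
  set D := Fin r₂ × Fin r₁
  have hM : ∃ (T : Matrix A (C ⊕ B ⊕ D) ℝ) (U : Matrix C (B ⊕ D) ℝ)
      (V : Matrix B D ℝ),
      ((Matrix.fromBlocks
      (1 : Matrix A A ℝ)
      (Matrix.fromCols
        ((1 : Matrix (Fin (N₂ - r₂)) (Fin (N₂ - r₂)) ℝ) ⊗ₖ δsᵀ)
        (Matrix.fromCols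
          (γsᵀ ⊗ₖ (1 : Matrix (Fin (N₁ - r₁)) (Fin (N₁ - r₁)) ℝ))
          (γsᵀ ⊗ₖ δsᵀ)))
      0
      (Matrix.fromBlocks
        (0 : Matrix B C ℝ)
        (Matrix.fromCols (1 : Matrix B B ℝ)
          ((1 : Matrix (Fin r₂) (Fin r₂) ℝ) ⊗ₖ δsᵀ))
        (Matrix.fromRows (1 : Matrix C C ℝ) (0 : Matrix D C ℝ))
        (Matrix.fromBlocks (0 : Matrix C B ℝ)
          (γsᵀ ⊗ₖ (1 : Matrix (Fin r₁) (Fin r₁) ℝ))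
          (0 : Matrix D B ℝ)
          (1 : Matrix D D ℝ)))).submatrix
        (Equiv.sumCongr (Equiv.refl A)
          (((Equiv.sumAssoc B C D).symm.trans
            ((Equiv.sumComm B C).sumCongr (Equiv.refl D))).trans
            (Equiv.sumAssoc C B D))).symm id) =
      Matrix.fromBlocks 1 T 0
        (Matrix.fromBlocks 1 U 0 (Matrix.fromBlocks 1 V 0 1)) := by
    refine ⟨Matrix.fromCols
        ((1 : Matrix (Fin (N₂ - r₂)) (Fin (N₂ - r₂)) ℝ) ⊗ₖ δsᵀ)
        (Matrix.fromCols
          (γsᵀ ⊗ₖ (1 : Matrix (Fin (N₁ - r₁)) (Fin (N₁ - r₁)) ℝ))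
          (γsᵀ ⊗ₖ δsᵀ)),
      Matrix.fromCols (0 : Matrix C B ℝ)
        (γsᵀ ⊗ₖ (1 : Matrix (Fin r₁) (Fin r₁) ℝ)),
      (1 : Matrix (Fin r₂) (Fin r₂) ℝ) ⊗ₖ δsᵀ, ?_⟩
    ext i j
    rcases i with a | c | b | d <;> rcases j with a' | c' | b' | d' <;>
      simp [Matrix.fromBlocks, Matrix.fromCols,
        Equiv.sumAssoc, Equiv.sumComm, Matrix.submatrix, Matrix.of_apply, Matrix.fromRows_apply_inl, Matrix.fromRows_apply_inr]
  obtain ⟨T, U, V, hM⟩ := hM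
  rw [hM, Matrix.det_fromBlocks_zero₂₁, Matrix.det_fromBlocks_zero₂₁,
    Matrix.det_fromBlocks_zero₂₁]
  simp
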